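/- Let C_d denote the full-support baker's map of 𝔠ⁿ moving the first letter of coordinate 1 to the front of coordinate d (2 ≤ d ≤ n). Then C_d = ⟨01₁, 10₁⟩ ∘ B_d(0₁) ∘ B_d(1₁), where B_d(x₁) is the baker's map supported on Γ(x₁) and ⟨01₁, 10₁⟩ is the transposition exchanging Γ(01,ε,…,ε) and Γ(10,ε,…,ε). -/
import Mathlib


open scoped Classical

/-- Finite words over the alphabet `{0,1}`. -/
abbrev Word := List Bool
/-- Cantor space: infinite `{0,1}`-sequences. -/
abbrev Cantor := ℕ → Bool

/-- Concatenate a finite word with an infinite sequence. -/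
def catW (α : Word) (w : Cantor) : Cantor :=
  fun i => if h : i < α.length then α.get ⟨i, h⟩ else w (i - α.length)

/-- The basic open set of sequences having `α` as a prefix. -/
def GammaW (α : Word) : Set Cantor := Set.range (catW α)

/-- Incomparability of words: neither is a prefix of the other. -/
def IncompW (α β : Word) : Prop := ¬ α <+: β ∧ ¬ β <+: α

/-- Addresses: `n`-tuples of finite words. -/
abbrev Addr (n : ℕ) := Fin n → Word
/-- `n`-dimensional Cantor space. -/
abbrev CantorN (n : ℕ) := Fin n → Cantor

/-- The basic open set in `𝔠ⁿ` indexed by the address `α`. -/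
def GammaN {n : ℕ} (α : Addr n) : Set (CantorN n) :=
  { w | ∀ d, w d ∈ GammaW (α d) }

/-- Incomparability of addresses: some coordinate pair is incomparable. -/
def IncompA {n : ℕ} (α β : Addr n) : Prop := ∃ d, IncompW (α d) (β d)

/-- Drop the first `k` symbols of an infinite sequence. -/
def dropSeq (k : ℕ) (w : Cantor) : Cantor := fun i => w (i + k)

/-- Prepend the address `α` coordinatewise. -/
def catA {n : ℕ} (α : Addr n) (u : CantorN n) : CantorN n :=
  fun d => catW (α d) (u d)

/-- Remove the prefix `α` coordinatewise. -/
def dropA {n : ℕ} (α : Addr n) (w : CantorN n) : CantorN n :=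
  fun d => dropSeq ((α d).length) (w d)

/-- The transposition `⟨α β⟩` of `𝔠ⁿ`: exchanges `Γ(α)` and `Γ(β)` by prefix
substitution and fixes all other points. -/
noncomputable def swapN {n : ℕ} (α β : Addr n) : CantorN n → CantorN n :=
  fun w =>
    if w ∈ GammaN α then catA β (dropA α w)
    else if w ∈ GammaN β then catA α (dropA β w)
    else w

/-- Append the symbol `x` to the `d`-th coordinate of the address `α`. -/
def appA {n : ℕ} (α : Addr n) (d : Fin n) (x : Bool) : Addr n :=
  Function.update α d (α d ++ [x])

/-- Append the word `u` to the `d`-th coordinate of the address `α`. -/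
def appW {n : ℕ} (α : Addr n) (d : Fin n) (u : Word) : Addr n :=
  Function.update α d (α d ++ u)

/-- Coordinatewise concatenation of addresses. -/
def concatA {n : ℕ} (α η : Addr n) : Addr n := fun d => α d ++ η d

/-- The address with word `u` in coordinate `d` and empty words elsewhere. -/
def unitA {n : ℕ} (d : Fin n) (u : Word) : Addr n :=
  fun e => if e = d then u else []

/-- Prepend a letter to an infinite sequence. -/
def consSeq (b : Bool) (w : Cantor) : Cantor :=
  fun i => match i with
  | 0 => b
  | i + 1 => w i

/-- The full-support baker's map: moves the first letter of coordinate `1`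
to the front of coordinate `d`. -/
def bakerFull {n : ℕ} [NeZero n] (d : Fin n) : CantorN n → CantorN n :=
  fun w e =>
    if e = 0 then dropSeq 1 (w 0)
    else if e = d then consSeq (w 0 0) (w d)
    else w e

/-- The inverse of the full-support baker's map: moves the first letter of
coordinate `d` to the front of coordinate `1`. -/
def invBakerFull {n : ℕ} [NeZero n] (d : Fin n) : CantorN n → CantorN n :=
  fun w e =>
    if e = 0 then consSeq (w d 0) (w 0)
    else if e = d then dropSeq 1 (w d)
    else w e

/-- The index-`d` baker's map with support `Γ(α)`: sends `α.x₁.u ↦ α.x_d.u`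
and fixes all points outside `Γ(α)`. -/
noncomputable def bakerN {n : ℕ} [NeZero n] (d : Fin n) (α : Addr n) :
    CantorN n → CantorN n :=
  fun w => if w ∈ GammaN α then catA α (bakerFull d (dropA α w)) else w

/-- The inverse of the index-`d` baker's map with support `Γ(α)`. -/
noncomputable def invBakerN {n : ℕ} [NeZero n] (d : Fin n) (α : Addr n) :
    CantorN n → CantorN n :=
  fun w => if w ∈ GammaN α then catA α (invBakerFull d (dropA α w)) else w

/-- The partial prefix-substitution action of the symbol `⟨γ δ⟩` on addresses,
as a relation: `ActRel γ δ ζ ζ'` holds iff `ζ • ⟨γ δ⟩` is defined and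
equals `ζ'`. -/
def ActRel {n : ℕ} (γ δ ζ ζ' : Addr n) : Prop :=
  (∃ η, ζ = concatA γ η ∧ ζ' = concatA δ η) ∨
  (∃ η, ζ = concatA δ η ∧ ζ' = concatA γ η) ∨
  (IncompA ζ γ ∧ IncompA ζ δ ∧ ζ' = ζ)

/-- The full-support baker's map factors as
`C_d = ⟨01₁, 10₁⟩ ; B_d(0₁) ; B_d(1₁)` (factors applied left to right). -/

lemma mem_GammaW (α : Word) (w : Cantor) :
    w ∈ GammaW α ↔ ∀ i (h : i < α.length), w i = α.get ⟨i, h⟩ := by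
  constructor
  · rintro ⟨u, rfl⟩ i h; simp [catW, h]
  · intro h
    refine ⟨dropSeq α.length w, ?_⟩
    funext i
    simp only [catW, dropSeq]
    split
    · next hi => exact (h i hi).symm
    · next hi => congr 1; omega

lemma mem_GammaW_single (b : Bool) (w : Cantor) :
    w ∈ GammaW [b] ↔ w 0 = b := by
  rw [mem_GammaW]
  constructor
  · intro h; exact h 0 (by norm_num)
  · intro h i hi
    simp only [List.length_cons, List.length_nil] at hi
    interval_cases i <;> simpa

lemma mem_GammaW_pair (b c : Bool) (w : Cantor) :
    w ∈ GammaW [b, c] ↔ w 0 = b ∧ w 1 = c := by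
  rw [mem_GammaW]
  constructor
  · intro h; exact ⟨h 0 (by norm_num), h 1 (by norm_num)⟩
  · rintro ⟨h0, h1⟩ i hi
    simp only [List.length_cons, List.length_nil] at hi
    interval_cases i <;> simpa

lemma mem_GammaN_unit {n : ℕ} (d : Fin n) (u : Word) (w : CantorN n) :
    w ∈ GammaN (unitA d u) ↔ w d ∈ GammaW u := by
  constructor
  · intro h; have := h d; simpa [unitA] using this
  · intro h e
    by_cases he : e = d
    · subst he; simpa [unitA] using h
    · simp [unitA, he, mem_GammaW]

@[simp] lemma catW_nil (w : Cantor) : catW [] w = w := by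
  funext i; simp [catW]

@[simp] lemma dropSeq_zero (w : Cantor) : dropSeq 0 w = w := by
  funext i; simp [dropSeq]

@[simp] lemma dropSeq_apply (k : ℕ) (w : Cantor) (i : ℕ) : dropSeq k w i = w (i + k) := rfl

@[simp] lemma consSeq_zero (b : Bool) (w : Cantor) : consSeq b w 0 = b := rfl
@[simp] lemma consSeq_succ (b : Bool) (w : Cantor) (i : ℕ) : consSeq b w (i + 1) = w i := rfl

@[simp] lemma catW_zero (b : Bool) (α : Word) (w : Cantor) : catW (b :: α) w 0 = b := by
  simp [catW]

@[simp] lemma catW_succ (b : Bool) (α : Word) (w : Cantor) (i : ℕ) :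
    catW (b :: α) w (i + 1) = catW α w i := by
  simp only [catW, List.length_cons]
  by_cases h : i < α.length
  · rw [dif_pos (by omega), dif_pos h]
    simp [List.get]
  · rw [dif_neg (by omega), dif_neg h]
    congr 1
    omega

lemma catA_unit_self {n : ℕ} (d : Fin n) (u : Word) (v : CantorN n) :
    catA (unitA d u) v d = catW u (v d) := by simp [catA, unitA]

lemma catA_unit_other {n : ℕ} {d e : Fin n} (he : e ≠ d) (u : Word) (v : CantorN n) :
    catA (unitA d u) v e = v e := by simp [catA, unitA, he]

lemma dropA_unit_self {n : ℕ} (d : Fin n) (u : Word) (w : CantorN n) :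
    dropA (unitA d u) w d = dropSeq u.length (w d) := by simp [dropA, unitA]

lemma dropA_unit_other {n : ℕ} {d e : Fin n} (he : e ≠ d) (u : Word) (w : CantorN n) :
    dropA (unitA d u) w e = w e := by simp [dropA, unitA, he]

lemma bakerFull_zero {n : ℕ} [NeZero n] (d : Fin n) (v : CantorN n) :
    bakerFull d v 0 = dropSeq 1 (v 0) := by simp [bakerFull]

lemma bakerFull_self {n : ℕ} [NeZero n] {d : Fin n} (hd : d ≠ 0) (v : CantorN n) :
    bakerFull d v d = consSeq (v 0 0) (v d) := by simp [bakerFull, hd]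

lemma bakerFull_other {n : ℕ} [NeZero n] {d e : Fin n} (he0 : e ≠ 0) (hed : e ≠ d)
    (v : CantorN n) : bakerFull d v e = v e := by simp [bakerFull, he0, hed]

theorem stmt14 (n : ℕ) [NeZero n] (hn : 2 ≤ n) (d : Fin n) (hd : d ≠ 0) :
    bakerFull d =
      bakerN d (unitA 0 [true]) ∘ bakerN d (unitA 0 [false]) ∘
        swapN (unitA 0 [false, true]) (unitA 0 [true, false]) := by
  have hd0 : ((0 : Fin n) : Fin n) ≠ d := fun h => hd h.symm
  funext w
  simp only [Function.comp_apply]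
  -- the two baker maps on a point fixed or produced appropriately
  cases hb : w 0 0 <;> cases hc : w 0 1
  · -- 00 : swap fixes, B(0) acts, B(1) fixes
    have hs : swapN (unitA (0 : Fin n) [false, true]) (unitA 0 [true, false]) w = w := by
      unfold swapN
      rw [if_neg, if_neg]
      · rw [mem_GammaN_unit, mem_GammaW_pair]; simp [hb]
      · rw [mem_GammaN_unit, mem_GammaW_pair]; simp [hc]
    rw [hs]
    have h2 : bakerN d (unitA (0 : Fin n) [false]) w
        = catA (unitA 0 [false]) (bakerFull d (dropA (unitA 0 [false]) w)) := by
      unfold bakerN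
      rw [if_pos]
      rw [mem_GammaN_unit, mem_GammaW_single]; exact hb
    rw [h2]
    set w1 := catA (unitA (0 : Fin n) [false]) (bakerFull d (dropA (unitA 0 [false]) w)) with hw1
    have h10 : w1 0 = catW [false] (dropSeq 1 (dropSeq 1 (w 0))) := by
      rw [hw1, catA_unit_self, bakerFull_zero, dropA_unit_self]
      simp
    have h1d : w1 d = consSeq (w 0 1) (w d) := by
      rw [hw1, catA_unit_other hd, bakerFull_self hd, dropA_unit_self,
        dropA_unit_other hd]
      simp
    have h1e : ∀ e, e ≠ 0 → e ≠ d → w1 e = w e := by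
      intro e he0 hed
      rw [hw1, catA_unit_other he0, bakerFull_other he0 hed, dropA_unit_other he0]
    have h3 : bakerN d (unitA (0 : Fin n) [true]) w1 = w1 := by
      unfold bakerN
      rw [if_neg]
      rw [mem_GammaN_unit, mem_GammaW_single, h10]
      simp
    rw [h3]
    funext e
    by_cases he0 : e = 0
    · subst he0
      rw [bakerFull_zero, h10]
      funext i
      match i with
      | 0 => simp [hc]
      | (i + 1) => simp
    · by_cases hed : e = d
      · subst hed
        rw [bakerFull_self hd, h1d, hb, hc]
      · rw [bakerFull_other he0 hed, h1e e he0 hed]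
  · -- 01 : swap acts, B(0) fixes, B(1) acts
    have hs : swapN (unitA (0 : Fin n) [false, true]) (unitA 0 [true, false]) w
        = catA (unitA 0 [true, false]) (dropA (unitA 0 [false, true]) w) := by
      unfold swapN
      rw [if_pos]
      rw [mem_GammaN_unit, mem_GammaW_pair]; exact ⟨hb, hc⟩
    rw [hs]
    set w1 := catA (unitA (0 : Fin n) [true, false]) (dropA (unitA 0 [false, true]) w) with hw1
    have h10 : w1 0 = catW [true, false] (dropSeq 2 (w 0)) := by
      rw [hw1, catA_unit_self, dropA_unit_self]; rfl
    have h1e : ∀ e, e ≠ 0 → w1 e = w e := by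
      intro e he0
      rw [hw1, catA_unit_other he0, dropA_unit_other he0]
    have h2 : bakerN d (unitA (0 : Fin n) [false]) w1 = w1 := by
      unfold bakerN
      rw [if_neg]
      rw [mem_GammaN_unit, mem_GammaW_single, h10]
      simp
    rw [h2]
    have h3 : bakerN d (unitA (0 : Fin n) [true]) w1
        = catA (unitA 0 [true]) (bakerFull d (dropA (unitA 0 [true]) w1)) := by
      unfold bakerN
      rw [if_pos]
      rw [mem_GammaN_unit, mem_GammaW_single, h10]
      simp
    rw [h3]
    funext e
    by_cases he0 : e = 0
    · subst he0
      rw [bakerFull_zero, catA_unit_self, bakerFull_zero, dropA_unit_self, h10]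
      funext i
      match i with
      | 0 => simp [hc]
      | (i + 1) => simp
    · by_cases hed : e = d
      · subst hed
        rw [bakerFull_self hd, catA_unit_other hd, bakerFull_self hd,
          dropA_unit_self, dropA_unit_other hd, h10, h1e e hd, hb]
        funext i
        match i with
        | 0 => simp
        | (i + 1) => simp
      · rw [bakerFull_other he0 hed, catA_unit_other he0,
          bakerFull_other he0 hed, dropA_unit_other he0, h1e e he0]
  · -- 10 : swap acts (second branch), B(0) acts, B(1) fixes
    have hs : swapN (unitA (0 : Fin n) [false, true]) (unitA 0 [true, false]) w
        = catA (unitA 0 [false, true]) (dropA (unitA 0 [true, false]) w) := by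
      unfold swapN
      rw [if_neg, if_pos]
      · rw [mem_GammaN_unit, mem_GammaW_pair]; exact ⟨hb, hc⟩
      · rw [mem_GammaN_unit, mem_GammaW_pair]; simp [hb]
    rw [hs]
    set w1 := catA (unitA (0 : Fin n) [false, true]) (dropA (unitA 0 [true, false]) w) with hw1
    have h10 : w1 0 = catW [false, true] (dropSeq 2 (w 0)) := by
      rw [hw1, catA_unit_self, dropA_unit_self]; rfl
    have h1e : ∀ e, e ≠ 0 → w1 e = w e := by
      intro e he0
      rw [hw1, catA_unit_other he0, dropA_unit_other he0]
    have h2 : bakerN d (unitA (0 : Fin n) [false]) w1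
        = catA (unitA 0 [false]) (bakerFull d (dropA (unitA 0 [false]) w1)) := by
      unfold bakerN
      rw [if_pos]
      rw [mem_GammaN_unit, mem_GammaW_single, h10]
      simp
    rw [h2]
    set w2 := catA (unitA (0 : Fin n) [false]) (bakerFull d (dropA (unitA 0 [false]) w1)) with hw2
    have h20 : w2 0 = catW [false] (dropSeq 1 (dropSeq 1 (w1 0))) := by
      rw [hw2, catA_unit_self, bakerFull_zero, dropA_unit_self]
      simp
    have h2d : w2 d = consSeq (w1 0 1) (w1 d) := by
      rw [hw2, catA_unit_other hd, bakerFull_self hd, dropA_unit_self,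
        dropA_unit_other hd]
      simp
    have h2e : ∀ e, e ≠ 0 → e ≠ d → w2 e = w1 e := by
      intro e he0 hed
      rw [hw2, catA_unit_other he0, bakerFull_other he0 hed, dropA_unit_other he0]
    have h3 : bakerN d (unitA (0 : Fin n) [true]) w2 = w2 := by
      unfold bakerN
      rw [if_neg]
      rw [mem_GammaN_unit, mem_GammaW_single, h20]
      simp
    rw [h3]
    funext e
    by_cases he0 : e = 0
    · subst he0
      rw [bakerFull_zero, h20, h10]
      funext i
      match i with
      | 0 => simp [hc]
      | (i + 1) => simp
    · by_cases hed : e = d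
      · subst hed
        rw [bakerFull_self hd, h2d, h10, h1e e hd, hb]
        funext i
        match i with
        | 0 => simp
        | (i + 1) => simp
      · rw [bakerFull_other he0 hed, h2e e he0 hed, h1e e he0]
  · -- 11 : swap fixes, B(0) fixes, B(1) acts
    have hs : swapN (unitA (0 : Fin n) [false, true]) (unitA 0 [true, false]) w = w := by
      unfold swapN
      rw [if_neg, if_neg]
      · rw [mem_GammaN_unit, mem_GammaW_pair]; simp [hc]
      · rw [mem_GammaN_unit, mem_GammaW_pair]; simp [hb]
    rw [hs]
    have h2 : bakerN d (unitA (0 : Fin n) [false]) w = w := by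
      unfold bakerN
      rw [if_neg]
      rw [mem_GammaN_unit, mem_GammaW_single]
      simp [hb]
    rw [h2]
    have h3 : bakerN d (unitA (0 : Fin n) [true]) w
        = catA (unitA 0 [true]) (bakerFull d (dropA (unitA 0 [true]) w)) := by
      unfold bakerN
      rw [if_pos]
      rw [mem_GammaN_unit, mem_GammaW_single]; exact hb
    rw [h3]
    funext e
    by_cases he0 : e = 0
    · subst he0
      rw [bakerFull_zero, catA_unit_self, bakerFull_zero, dropA_unit_self]
      funext i
      match i with
      | 0 => simp [hc]
      | (i + 1) => simp
    · by_cases hed : e = d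
      · subst hed
        rw [bakerFull_self hd, catA_unit_other hd, bakerFull_self hd,
          dropA_unit_self, dropA_unit_other hd, hb]
        funext i
        match i with
        | 0 => simp [hc]
        | (i + 1) => simp
      · rw [bakerFull_other he0 hed, catA_unit_other he0,
          bakerFull_other he0 hed, dropA_unit_other he0]
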